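/- arXiv:1908.02474 — 4 statements merged into one kernel-verified Lean document; each statement's English description precedes it below -/
import Mathlib

section
/- For the Pythagorean parametrization x = 2nk + k², y = 2n² + 2nk, z = 2n² + 2nk + k² with n, k positive integers, the ratio z/|x − y| equals ((k/n)² + 2(k/n) + 2)/|(k/n)² − 2|, and hence for any constant C > 0 there exist n, k (with k even) such that z > C·|x − y|. -/
/-- Pell solutions to a² = 2b² + 1. -/
def pellSeq : ℕ → ℕ × ℕ
  | 0 => (3, 2)
  | i + 1 => (3 * (pellSeq i).1 + 4 * (pellSeq i).2, 2 * (pellSeq i).1 + 3 * (pellSeq i).2)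

lemma pellSeq_inv (i : ℕ) : (pellSeq i).1 ^ 2 = 2 * (pellSeq i).2 ^ 2 + 1 := by
  induction i with
  | zero => rfl
  | succ i ih =>
    simp only [pellSeq]
    ring_nf
    ring_nf at ih
    nlinarith [ih]

lemma pellSeq_ge (i : ℕ) : i + 3 ≤ (pellSeq i).1 := by
  induction i with
  | zero => simp [pellSeq]
  | succ i ih =>
    simp only [pellSeq]
    omega

/-- For x = 2nk + k², y = 2n² + 2nk, z = 2n² + 2nk + k² (n, k positive integers),
the ratio z/|x − y| equals ((k/n)² + 2(k/n) + 2)/|(k/n)² − 2|, and for any C > 0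
one can choose n, k with k even such that z > C·|x − y|. -/
theorem pythagorean_ratio :
    (∀ n k : ℕ, 0 < n → 0 < k → ((k : ℝ) / n) ^ 2 ≠ 2 →
      ((2 * (n : ℝ) ^ 2 + 2 * n * k + k ^ 2) /
          |(2 * (n : ℝ) * k + k ^ 2) - (2 * (n : ℝ) ^ 2 + 2 * n * k)|
        = (((k : ℝ) / n) ^ 2 + 2 * ((k : ℝ) / n) + 2) / |((k : ℝ) / n) ^ 2 - 2|)) ∧
    (∀ C : ℝ, 0 < C → ∃ n k : ℕ, 0 < n ∧ 0 < k ∧ Even k ∧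
      (2 * (n : ℝ) ^ 2 + 2 * n * k + k ^ 2)
        > C * |(2 * (n : ℝ) * k + k ^ 2) - (2 * (n : ℝ) ^ 2 + 2 * n * k)|) := by
  constructor
  · intro n k hn hk hne
    have hn0 : (n : ℝ) ≠ 0 := Nat.cast_ne_zero.mpr hn.ne'
    have h1 : (2 * (n : ℝ) * k + k ^ 2) - (2 * (n : ℝ) ^ 2 + 2 * n * k)
        = (n : ℝ) ^ 2 * (((k : ℝ) / n) ^ 2 - 2) := by
      field_simp
      ring
    have h2 : (2 * (n : ℝ) ^ 2 + 2 * n * k + k ^ 2)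
        = (n : ℝ) ^ 2 * (((k : ℝ) / n) ^ 2 + 2 * ((k : ℝ) / n) + 2) := by
      field_simp
      ring
    have habs : |((k : ℝ) / n) ^ 2 - 2| ≠ 0 := abs_ne_zero.mpr (sub_ne_zero.mpr hne)
    rw [h1, h2, abs_mul, abs_of_nonneg (by positivity : (0:ℝ) ≤ (n : ℝ) ^ 2)]
    rw [mul_div_mul_comm, div_self (by positivity), one_mul]
  · intro C hC
    set i := Nat.ceil C with hi
    set a := (pellSeq i).1 with ha
    set b := (pellSeq i).2 with hb
    have hinv : a ^ 2 = 2 * b ^ 2 + 1 := pellSeq_inv i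
    have hge : i + 3 ≤ a := pellSeq_ge i
    have hb0 : 0 < b := by nlinarith [hinv, hge]
    refine ⟨a, 2 * b, by omega, by omega, even_two_mul b, ?_⟩
    have hcast : (a : ℝ) ^ 2 = 2 * (b : ℝ) ^ 2 + 1 := by
      exact_mod_cast congrArg (Nat.cast : ℕ → ℝ) hinv
    have habs : |(2 * (a : ℝ) * (↑(2 * b)) + (↑(2 * b)) ^ 2)
        - (2 * (a : ℝ) ^ 2 + 2 * a * (↑(2 * b)))| = 2 := by
      push_cast
      have : (2 * (a : ℝ) * (2 * b) + (2 * b) ^ 2) - (2 * (a : ℝ) ^ 2 + 2 * a * (2 * b))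
          = -2 := by nlinarith [hcast]
      rw [this]
      norm_num
    rw [habs]
    have haC : C ≤ (a : ℝ) := by
      calc C ≤ (Nat.ceil C : ℝ) := Nat.le_ceil C
        _ ≤ (a : ℝ) := by exact_mod_cast le_trans (by omega) hge
    have ha1 : (1 : ℝ) ≤ (a : ℝ) := by exact_mod_cast (by omega : 1 ≤ a)
    push_cast
    nlinarith [haC, ha1, hb0, (Nat.cast_pos (α := ℝ)).mpr hb0]
end

section
/- The closure in ℝ of the set { ef/(e+f) : e, f ∈ ℤ_{>0} } equals { ef/(e+f) : e, f ∈ ℤ_{>0} } ∪ ℤ_{>0}. -/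
open Filter Set Topology

private noncomputable def Aset (m : ℕ) : Set ℝ :=
  insert (m : ℝ) (Set.range fun k : ℕ => (m : ℝ) * ((m : ℝ) + k) / ((m : ℝ) + ((m : ℝ) + k)))

private lemma tendsto_aux (m : ℕ) (hm : 0 < m) :
    Tendsto (fun k : ℕ => (m : ℝ) * ((m : ℝ) + k) / ((m : ℝ) + ((m : ℝ) + k))) atTop (𝓝 m) := by
  have hm' : (0 : ℝ) < m := by exact_mod_cast hm
  have h1 : Tendsto (fun k : ℕ => (2 * m : ℝ) + k) atTop atTop :=
    tendsto_atTop_add_const_left _ _ tendsto_natCast_atTop_atTop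
  have h2 : Tendsto (fun k : ℕ => (m : ℝ) ^ 2 / ((2 * m : ℝ) + k)) atTop (𝓝 0) :=
    Tendsto.div_atTop tendsto_const_nhds h1
  have h3 : Tendsto (fun k : ℕ => (m : ℝ) - (m : ℝ) ^ 2 / ((2 * m : ℝ) + k)) atTop
      (𝓝 ((m : ℝ) - 0)) := tendsto_const_nhds.sub h2
  rw [sub_zero] at h3
  convert h3 using 2 with k
  have hk : (0 : ℝ) ≤ (k : ℝ) := Nat.cast_nonneg k
  have hd : (m : ℝ) + ((m : ℝ) + k) ≠ 0 := by positivity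
  have hd2 : (2 * m : ℝ) + k ≠ 0 := by positivity
  field_simp
  ring

private lemma Aset_isClosed (m : ℕ) : IsClosed (Aset m) := by
  rcases Nat.eq_zero_or_pos m with h | h
  · subst h
    have : Aset 0 = {(0:ℝ)} := by
      unfold Aset
      ext x
      simp only [Nat.cast_zero, mem_insert_iff, mem_range, mem_singleton_iff]
      constructor
      · rintro (rfl | ⟨k, rfl⟩) <;> simp
      · rintro rfl; left; rfl
    rw [this]; exact isClosed_singleton
  · exact (tendsto_aux m h).isCompact_insert_range.isClosed

private lemma Aset_subset (m : ℕ) (hm : 0 < m) : Aset m ⊆ Icc ((m : ℝ) / 2) (m : ℝ) := by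
  have hm' : (0 : ℝ) < m := by exact_mod_cast hm
  rintro x (rfl | ⟨k, rfl⟩)
  · constructor <;> linarith
  · have hk : (0 : ℝ) ≤ (k : ℝ) := Nat.cast_nonneg k
    have hd : (0 : ℝ) < (m : ℝ) + ((m : ℝ) + k) := by positivity
    dsimp only
    constructor
    · rw [div_le_div_iff₀ (by norm_num) hd]
      nlinarith
    · rw [div_le_iff₀ hd]
      nlinarith

private lemma Aset_locallyFinite : LocallyFinite (fun m : ℕ => Aset (m + 1)) := by
  intro x
  refine ⟨Metric.ball x 1, Metric.ball_mem_nhds x one_pos, ?_⟩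
  apply Set.Finite.subset (Set.finite_Iio (⌈2 * x + 1⌉₊ + 1))
  rintro m ⟨y, hy, hy'⟩
  have h1 := (Aset_subset (m + 1) (Nat.succ_pos m) hy).1
  have h2 : |y - x| < 1 := by simpa [Real.dist_eq] using hy'
  have h3 : y < x + 1 := by
    have := abs_lt.mp h2
    linarith [this.1, this.2]
  have h4 : (m : ℝ) < 2 * x + 1 := by push_cast at h1 ⊢; linarith
  have h5 : (m : ℝ) < (⌈2 * x + 1⌉₊ : ℝ) + 1 :=
    lt_of_lt_of_le h4 (by linarith [Nat.le_ceil (2 * x + 1)])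
  have : m < ⌈2 * x + 1⌉₊ + 1 := by exact_mod_cast h5
  simpa using this

/-- The closure of J = { ef/(e+f) : e, f ∈ ℤ_{>0} } in ℝ is J ∪ ℤ_{>0}. -/
theorem closure_of_ELSV_set :
    closure {x : ℝ | ∃ e f : ℕ, 0 < e ∧ 0 < f ∧ x = (e : ℝ) * f / (e + f)}
      = {x : ℝ | ∃ e f : ℕ, 0 < e ∧ 0 < f ∧ x = (e : ℝ) * f / (e + f)}
        ∪ {x : ℝ | ∃ m : ℕ, 0 < m ∧ x = (m : ℝ)} := by
  set J : Set ℝ := {x : ℝ | ∃ e f : ℕ, 0 < e ∧ 0 < f ∧ x = (e : ℝ) * f / (e + f)} with hJ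
  have hunion : (⋃ m : ℕ, Aset (m + 1)) = J ∪ {x : ℝ | ∃ m : ℕ, 0 < m ∧ x = (m : ℝ)} := by
    ext x
    simp only [mem_iUnion, mem_union, hJ, mem_setOf_eq]
    constructor
    · rintro ⟨m, (rfl | ⟨k, rfl⟩)⟩
      · exact Or.inr ⟨m + 1, Nat.succ_pos m, rfl⟩
      · refine Or.inl ⟨m + 1, m + 1 + k, Nat.succ_pos m, by omega, ?_⟩
        push_cast
        ring_nf
    · rintro (⟨e, f, he, hf, rfl⟩ | ⟨m, hm, rfl⟩)
      · rcases le_total e f with hef | hef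
        · refine ⟨e - 1, Or.inr ⟨f - e, ?_⟩⟩
          have h1 : e - 1 + 1 = e := by omega
          have h2 : e + (f - e) = f := by omega
          rw [h1]
          dsimp only
          have : ((e : ℝ) + (f - e : ℕ)) = (f : ℝ) := by
            rw [← Nat.cast_add, h2]
          rw [this]
        · refine ⟨f - 1, Or.inr ⟨e - f, ?_⟩⟩
          have h1 : f - 1 + 1 = f := by omega
          have h2 : f + (e - f) = e := by omega
          rw [h1]
          dsimp only
          have : ((f : ℝ) + (e - f : ℕ)) = (e : ℝ) := by
            rw [← Nat.cast_add, h2]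
          rw [this]
          ring
      · refine ⟨m - 1, Or.inl ?_⟩
        have h1 : m - 1 + 1 = m := by omega
        rw [h1]
  apply subset_antisymm
  · have hclosed : IsClosed (⋃ m : ℕ, Aset (m + 1)) :=
      Aset_locallyFinite.isClosed_iUnion fun m => Aset_isClosed (m + 1)
    have hsub : J ⊆ ⋃ m : ℕ, Aset (m + 1) := by
      rw [hunion]; exact subset_union_left
    calc closure J ⊆ closure (⋃ m : ℕ, Aset (m + 1)) := closure_mono hsub
      _ = ⋃ m : ℕ, Aset (m + 1) := hclosed.closure_eq
      _ = _ := hunion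
  · rintro x (hx | ⟨m, hm, rfl⟩)
    · exact subset_closure hx
    · refine mem_closure_of_tendsto (tendsto_aux m hm) (Eventually.of_forall fun k => ?_)
      refine ⟨m, m + k, hm, by omega, ?_⟩
      push_cast
      ring_nf
end

section
/- Let P₁ = { (x,y) ∈ ℝ_{≥0}² : xy ≥ 1 } and P₂ = { (x,y) : x > 1, y > 1, (x−1)(y−1) ≥ 1 }. Then for every c > 0, the Minkowski sum P₂ + c·P₁ equals { (x,y) ∈ ℝ_{≥0}² : x > 1, y > 1, (x−1)(y−1) ≥ (c+1)² }. -/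
open scoped Pointwise

/-- For P₁ = { (x,y) ∈ ℝ_{≥0}² : xy ≥ 1 } and
P₂ = { (x,y) : x > 1, y > 1, (x−1)(y−1) ≥ 1 }, for every c > 0 the Minkowski sum
P₂ + c·P₁ equals { (x,y) : x > 1, y > 1, (x−1)(y−1) ≥ (c+1)² }. -/
theorem minkowski_sum_newton_bodies (c : ℝ) (hc : 0 < c) :
    ({p : ℝ × ℝ | 1 < p.1 ∧ 1 < p.2 ∧ (p.1 - 1) * (p.2 - 1) ≥ 1}
        + c • {p : ℝ × ℝ | 0 ≤ p.1 ∧ 0 ≤ p.2 ∧ p.1 * p.2 ≥ 1})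
      = {p : ℝ × ℝ | 1 < p.1 ∧ 1 < p.2 ∧ (p.1 - 1) * (p.2 - 1) ≥ (c + 1) ^ 2} := by
  have hc1 : (0:ℝ) < c + 1 := by linarith
  ext ⟨x, y⟩
  constructor
  · rintro ⟨⟨a, b⟩, ⟨ha, hb, hab⟩, q, hq, hsum⟩
    obtain ⟨⟨u, v⟩, ⟨hu, hv, huv⟩, rfl⟩ := hq
    simp only [Prod.smul_mk, smul_eq_mul, Prod.mk_add_mk, Prod.mk.injEq] at hsum
    have hx : x = a + c * u := by
      have := hsum.1; simpa using this.symm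
    have hy : y = b + c * v := by
      have := hsum.2; simpa using this.symm
    subst hx; subst hy
    simp only [Set.mem_setOf_eq]
    have hA : 0 ≤ u * (b - 1) := mul_nonneg hu (by linarith)
    have hB : 0 ≤ v * (a - 1) := mul_nonneg hv (by linarith)
    have hAB : 1 ≤ (u * (b - 1)) * (v * (a - 1)) := by nlinarith
    have hkey : 2 ≤ u * (b - 1) + v * (a - 1) := by
      nlinarith [sq_nonneg (u * (b - 1) - v * (a - 1))]
    refine ⟨by nlinarith, by nlinarith, ?_⟩
    have h1 : 2 * c ≤ c * (u * (b - 1) + v * (a - 1)) := by nlinarith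
    have h2 : c * c ≤ c * c * (u * v) := by nlinarith [mul_nonneg hc.le hc.le]
    nlinarith
  · rintro ⟨hx, hy, hxy⟩
    simp only [Set.mem_setOf_eq] at hx hy hxy
    refine ⟨(1 + (x - 1) / (c + 1), 1 + (y - 1) / (c + 1)),
      ⟨?_, ?_, ?_⟩, (c * ((x - 1) / (c + 1)), c * ((y - 1) / (c + 1))),
      ⟨((x - 1) / (c + 1), (y - 1) / (c + 1)), ⟨?_, ?_, ?_⟩, rfl⟩, ?_⟩
    · simp only
      have : 0 < (x - 1) / (c + 1) := div_pos (by linarith) hc1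
      linarith
    · simp only
      have : 0 < (y - 1) / (c + 1) := div_pos (by linarith) hc1
      linarith
    · simp only
      rw [add_sub_cancel_left, add_sub_cancel_left, div_mul_div_comm]
      rw [ge_iff_le, le_div_iff₀ (by positivity)]
      nlinarith
    · exact le_of_lt (div_pos (by linarith) hc1)
    · exact le_of_lt (div_pos (by linarith) hc1)
    · rw [div_mul_div_comm, ge_iff_le, le_div_iff₀ (by positivity)]
      nlinarith
    · simp only [Prod.smul_mk, smul_eq_mul, Prod.mk_add_mk, Prod.mk.injEq]
      constructor <;> field_simp <;> ring
end

section
/- Let P ⊆ ℝ_{≥0}² be a closed convex set with P + ℝ_{≥0}² ⊆ P, and let x₀ = inf pr₁(P) > 0 with the vertical line { (x₀, t) : t ∈ ℝ } disjoint from P. Then for every positive integer k, the number k/x₀ is a limit point of the set C = { c > 0 : ∂(cP) ∩ ℤ_{>0}² ≠ ∅ }. -/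
open scoped Pointwise

/-- Let P ⊆ ℝ_{≥0}² be nonempty, closed, convex, with P + ℝ_{≥0}² ⊆ P. Assume
x₀ = inf pr₁(P) > 0 and the vertical line x = x₀ is disjoint from P. Then for
every positive integer k, the number k/x₀ is a cluster point of the set
C = { c > 0 : ∂(cP) contains a point of ℤ_{>0}² }. -/
theorem asymptote_gives_cluster_points (P : Set (ℝ × ℝ))
    (hne : P.Nonempty) (hclosed : IsClosed P) (hconv : Convex ℝ P)
    (hquad : P ⊆ {p : ℝ × ℝ | 0 ≤ p.1 ∧ 0 ≤ p.2})
    (horth : P + {p : ℝ × ℝ | 0 ≤ p.1 ∧ 0 ≤ p.2} ⊆ P)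
    (x₀ : ℝ) (hx₀ : x₀ = sInf (Prod.fst '' P)) (hx₀pos : 0 < x₀)
    (hasym : ∀ t : ℝ, (x₀, t) ∉ P)
    (C : Set ℝ)
    (hC : C = {c : ℝ | 0 < c ∧ ∃ p q : ℕ, 0 < p ∧ 0 < q ∧
      ((p : ℝ), (q : ℝ)) ∈ frontier (c • P)})
    (k : ℕ) (hk : 0 < k) :
    (k : ℝ) / x₀ ∈ closure (C \ {(k : ℝ) / x₀}) := by
  have hkpos : (0 : ℝ) < k := Nat.cast_pos.mpr hk
  -- basic facts about the infimum
  have hbdd : BddBelow (Prod.fst '' P) := by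
    refine ⟨0, ?_⟩
    rintro a ⟨p, hp, rfl⟩
    exact (hquad hp).1
  have hlb : ∀ p ∈ P, x₀ ≤ p.1 := by
    intro p hp
    rw [hx₀]
    exact csInf_le hbdd ⟨p, hp, rfl⟩
  -- a helper: adding a nonnegative vector stays in P
  have hadd : ∀ p ∈ P, ∀ a b : ℝ, p.1 ≤ a → p.2 ≤ b → (a, b) ∈ P := by
    intro p hp a b ha hb
    have : p + (a - p.1, b - p.2) ∈ P + {p : ℝ × ℝ | 0 ≤ p.1 ∧ 0 ≤ p.2} :=
      Set.add_mem_add hp ⟨by simpa using ha, by simpa using hb⟩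
    have h2 := horth this
    have he : p + (a - p.1, b - p.2) = (a, b) := by
      rw [Prod.ext_iff]; simp
    rwa [he] at h2
  rw [Metric.mem_closure_iff]
  intro ε hε
  set m : ℝ := min ε ((k : ℝ) / x₀) with hm
  have hmpos : 0 < m := lt_min hε (div_pos hkpos hx₀pos)
  set c₀ : ℝ := (k : ℝ) / x₀ - m / 2 with hc₀
  have hc₀pos : 0 < c₀ := by
    have : m / 2 < (k : ℝ) / x₀ := by
      have h1 : m ≤ (k : ℝ) / x₀ := min_le_right _ _
      linarith
    simpa [hc₀] using sub_pos.mpr this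
  have hc₀lt : c₀ < (k : ℝ) / x₀ := by
    have : 0 < m / 2 := by linarith
    simp [hc₀]; linarith
  -- x₁ = k / c₀ > x₀
  set x₁ : ℝ := (k : ℝ) / c₀ with hx₁def
  have hx₁ : x₀ < x₁ := by
    rw [hx₁def, lt_div_iff₀ hc₀pos]
    calc x₀ * c₀ < x₀ * ((k : ℝ) / x₀) := by
          exact (mul_lt_mul_iff_right₀ hx₀pos).mpr hc₀lt
      _ = k := by field_simp
  -- find a point of P with first coordinate < x₁
  have hinf : sInf (Prod.fst '' P) < x₁ := by rw [← hx₀]; exact hx₁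
  obtain ⟨a, ⟨p, hpP, rfl⟩, hax⟩ := (csInf_lt_iff hbdd (hne.image _)).mp hinf
  have hp2 : 0 ≤ p.2 := (hquad hpP).2
  -- choose the integer q
  set q : ℕ := max 1 ⌈c₀ * p.2⌉₊ with hqdef
  have hq0 : 0 < q := lt_of_lt_of_le one_pos (le_max_left _ _)
  have hqge : c₀ * p.2 ≤ (q : ℝ) := by
    calc c₀ * p.2 ≤ (⌈c₀ * p.2⌉₊ : ℝ) := Nat.le_ceil _
      _ ≤ (q : ℝ) := by exact_mod_cast Nat.cast_le.mpr (le_max_right _ _)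
  have hqpos : (0 : ℝ) < q := Nat.cast_pos.mpr hq0
  -- the set S of scalings c with (k,q) ∈ c • P
  set S : Set ℝ := {c : ℝ | 0 < c ∧ (c⁻¹ * k, c⁻¹ * (q : ℝ)) ∈ P} with hS
  have hc₀S : c₀ ∈ S := by
    refine ⟨hc₀pos, ?_⟩
    have h1 : c₀⁻¹ * k = x₁ := by rw [hx₁def]; field_simp
    have h2 : p.2 ≤ c₀⁻¹ * q := by
      rw [inv_mul_eq_div, le_div_iff₀ hc₀pos, mul_comm]
      exact hqge
    rw [h1]
    exact hadd p hpP x₁ (c₀⁻¹ * q) hax.le h2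
  have hSne : S.Nonempty := ⟨c₀, hc₀S⟩
  have hub : ∀ c ∈ S, c ≤ (k : ℝ) / x₀ := by
    rintro c ⟨hc, hcP⟩
    have h1 : x₀ ≤ c⁻¹ * k := hlb _ hcP
    rw [le_div_iff₀ hx₀pos]
    calc c * x₀ ≤ c * (c⁻¹ * k) := (mul_le_mul_iff_right₀ hc).mpr h1
      _ = k := by field_simp
  have hbddS : BddAbove S := ⟨(k : ℝ) / x₀, hub⟩
  set c : ℝ := sSup S with hcdef
  have hcc₀ : c₀ ≤ c := le_csSup hbddS hc₀S
  have hcpos : 0 < c := lt_of_lt_of_le hc₀pos hcc₀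
  have hcle : c ≤ (k : ℝ) / x₀ := csSup_le hSne hub
  -- S contains all smaller positive reals
  have hlower : ∀ c' : ℝ, 0 < c' → c' < c → c' ∈ S := by
    intro c' hc' hlt
    obtain ⟨c₁, hc₁S, hcc₁⟩ := exists_lt_of_lt_csSup hSne hlt
    refine ⟨hc', ?_⟩
    have hc₁pos := hc₁S.1
    have h1 : c₁⁻¹ * k ≤ c'⁻¹ * k :=
      mul_le_mul_of_nonneg_right (by
        exact inv_anti₀ hc' hcc₁.le) hkpos.le
    have h2 : c₁⁻¹ * q ≤ c'⁻¹ * q :=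
      mul_le_mul_of_nonneg_right (by
        exact inv_anti₀ hc' hcc₁.le) hqpos.le
    exact hadd _ hc₁S.2 _ _ h1 h2
  -- c itself belongs to S by closedness
  have hmemP : (c⁻¹ * k, c⁻¹ * (q : ℝ)) ∈ P := by
    have hcont : ContinuousAt (fun t : ℝ => (t⁻¹ * (k : ℝ), t⁻¹ * (q : ℝ))) c := by
      exact ContinuousAt.prodMk
        (((continuousAt_inv₀ hcpos.ne').mul continuousAt_const))
        (((continuousAt_inv₀ hcpos.ne').mul continuousAt_const))
    have htend : Filter.Tendsto (fun t : ℝ => (t⁻¹ * (k : ℝ), t⁻¹ * (q : ℝ)))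
        (nhdsWithin c (Set.Iio c)) (nhds (c⁻¹ * k, c⁻¹ * (q : ℝ))) :=
      hcont.tendsto.mono_left nhdsWithin_le_nhds
    have hev : ∀ᶠ t in nhdsWithin c (Set.Iio c),
        (t⁻¹ * (k : ℝ), t⁻¹ * (q : ℝ)) ∈ P := by
      filter_upwards [Ioo_mem_nhdsLT_of_mem (Set.mem_Ioc.mpr ⟨hcpos, le_refl c⟩)]
        with t ht
      exact (hlower t ht.1 ht.2).2
    exact hclosed.mem_of_tendsto htend hev
  -- c < k / x₀, in particular c ≠ k / x₀
  have hcne : c ≠ (k : ℝ) / x₀ := by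
    intro h
    have h1 : c⁻¹ * k = x₀ := by
      rw [h]
      field_simp
    apply hasym (c⁻¹ * q)
    rw [← h1]
    exact hmemP
  -- (k, q) lies on the frontier of c • P
  have hsmul_mem : ((k : ℝ), (q : ℝ)) ∈ c • P := by
    have := Set.smul_mem_smul_set (a := c) hmemP
    have heq : c • ((c⁻¹ * (k:ℝ), c⁻¹ * (q:ℝ)) : ℝ × ℝ) = ((k : ℝ), (q : ℝ)) := by
      rw [Prod.smul_mk]
      simp only [smul_eq_mul]
      rw [← mul_assoc, ← mul_assoc, mul_inv_cancel₀ hcpos.ne', one_mul, one_mul]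
    rwa [heq] at this
  have hnotint : ((k : ℝ), (q : ℝ)) ∉ interior (c • P) := by
    intro hint
    rw [interior_smul₀ hcpos.ne'] at hint
    obtain ⟨z, hz, hzeq0⟩ := hint
    have hzeq : c • z = (((k : ℝ), (q : ℝ)) : ℝ × ℝ) := hzeq0
    -- z = (c⁻¹ k, c⁻¹ q)
    have hzval : z = (c⁻¹ * k, c⁻¹ * (q : ℝ)) := by
      have : c⁻¹ • (c • z) = c⁻¹ • (((k : ℝ), (q : ℝ)) : ℝ × ℝ) := by rw [hzeq]
      rw [← smul_assoc, smul_eq_mul, inv_mul_cancel₀ hcpos.ne', one_smul] at this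
      rw [this, Prod.smul_mk]
      simp [smul_eq_mul]
    obtain ⟨δ, hδ, hball⟩ := Metric.mem_nhds_iff.mp (mem_interior_iff_mem_nhds.mp hz)
    have hznorm : 0 < ‖z‖ := by
      have h1 : 0 < c⁻¹ * k := mul_pos (inv_pos.mpr hcpos) hkpos
      have hz1 : z.1 ≠ 0 := by rw [hzval]; exact h1.ne'
      refine norm_pos_iff.mpr ?_
      intro h
      rw [h] at hz1
      exact hz1 rfl
    set θ : ℝ := min (1/2 : ℝ) (δ / (2 * ‖z‖)) with hθdef
    have hθpos : 0 < θ := lt_min (by norm_num) (div_pos hδ (by positivity))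
    have hθlt : θ < 1 := lt_of_le_of_lt (min_le_left _ _) (by norm_num)
    have hz' : (1 - θ) • z ∈ P := by
      apply hball
      rw [Metric.mem_ball, dist_eq_norm]
      have : (1 - θ) • z - z = (-θ) • z := by
        rw [sub_smul, one_smul, neg_smul]; abel
      rw [this, norm_smul, norm_neg, Real.norm_eq_abs, abs_of_pos hθpos]
      calc θ * ‖z‖ ≤ (δ / (2 * ‖z‖)) * ‖z‖ :=
            mul_le_mul_of_nonneg_right (min_le_right _ _) hznorm.le
        _ = δ / 2 := by field_simp
        _ < δ := by linarith
    set c' : ℝ := c / (1 - θ) with hc'def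
    have h1θ : 0 < 1 - θ := by linarith
    have hc'pos : 0 < c' := div_pos hcpos h1θ
    have hc'S : c' ∈ S := by
      refine ⟨hc'pos, ?_⟩
      have h1 : c'⁻¹ = (1 - θ) * c⁻¹ := by
        rw [hc'def]; field_simp
      have h2 : ((c'⁻¹ * (k:ℝ), c'⁻¹ * (q:ℝ)) : ℝ × ℝ) = (1 - θ) • z := by
        rw [hzval, Prod.smul_mk]
        simp only [smul_eq_mul]
        rw [h1]; ring_nf
      rw [h2]
      exact hz'
    have hc'gt : c < c' := by
      rw [hc'def, lt_div_iff₀ h1θ]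
      nlinarith
    exact absurd (le_csSup hbddS hc'S) (not_le.mpr hc'gt)
  have hfront : ((k : ℝ), (q : ℝ)) ∈ frontier (c • P) := by
    rw [(hclosed.smul_of_ne_zero hcpos.ne').frontier_eq]
    exact ⟨hsmul_mem, hnotint⟩
  -- conclude
  refine ⟨c, ⟨?_, ?_⟩, ?_⟩
  · rw [hC]
    exact ⟨hcpos, k, q, hk, hq0, hfront⟩
  · simpa using hcne
  · rw [Real.dist_eq, abs_of_nonneg (by linarith : (0:ℝ) ≤ (k:ℝ)/x₀ - c)]
    have h1 : m ≤ ε := min_le_left _ _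
    have h2 : (k:ℝ)/x₀ - c ≤ (k:ℝ)/x₀ - c₀ := sub_le_sub_left hcc₀ _
    rw [hc₀] at h2
    linarith
end
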